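/- Let A be a finite set of roots {e_i - e_j} in R^n and let σ_A be the cone of all nonnegative real combinations of elements of A. Then e_i - e_j ∈ σ_A if and only if there is a directed path from i to j in the directed graph Γ_A on [n] having an edge i → j for each e_i - e_j ∈ A. -/

import Mathlib

/-- The root `e_i - e_j` in `ℝ^n`. -/
def rootVec (n : ℕ) (i j : Fin n) : Fin n → ℝ :=
  Pi.single i 1 - Pi.single j 1

lemma rootVec_apply {n : ℕ} (a b k : Fin n) :
    rootVec n a b k = (if k = a then (1:ℝ) else 0) - (if k = b then 1 else 0) := by
  simp [rootVec, Pi.single_apply]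

lemma sum_rootVec {n : ℕ} (S : Finset (Fin n)) (a b : Fin n) :
    ∑ k ∈ S, rootVec n a b k
      = (if a ∈ S then (1:ℝ) else 0) - (if b ∈ S then 1 else 0) := by
  simp only [rootVec_apply]
  rw [Finset.sum_sub_distrib, Finset.sum_ite_eq' S a (fun _ => (1:ℝ)),
    Finset.sum_ite_eq' S b (fun _ => (1:ℝ))]

lemma rootVec_add {n : ℕ} (a b c : Fin n) :
    rootVec n a b + rootVec n b c = rootVec n a c := by
  simp only [rootVec]; abel

lemma single_comb {n : ℕ} (A : Finset (Fin n × Fin n)) (a b : Fin n)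
    (hab : (a, b) ∈ A) :
    rootVec n a b = ∑ p ∈ A, (if p = (a, b) then (1:ℝ) else 0) • rootVec n p.1 p.2 := by
  classical
  simp [ite_smul, Finset.sum_ite_eq', hab]

/-- For a finite set `A` of roots, `e_i - e_j` lies in the cone of nonnegative
combinations of `A` iff there is a directed path from `i` to `j` in the directed
graph `Γ_A` with an edge `a → b` for each root `e_a - e_b ∈ A`. -/
theorem stmt5 {n : ℕ} (A : Finset (Fin n × Fin n)) (hA : ∀ p ∈ A, p.1 ≠ p.2)
    (i j : Fin n) (hij : i ≠ j) :
    (∃ c : Fin n × Fin n → ℝ, (∀ p, 0 ≤ c p) ∧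
        rootVec n i j = ∑ p ∈ A, c p • rootVec n p.1 p.2) ↔
      Relation.TransGen (fun a b : Fin n => (a, b) ∈ A) i j := by
  classical
  constructor
  · rintro ⟨c, hc, heq⟩
    set R : Fin n → Fin n → Prop := fun a b => (a, b) ∈ A ∧ 0 < c (a, b) with hR
    set S : Finset (Fin n) := Finset.univ.filter (fun k => Relation.ReflTransGen R i k)
      with hS
    have hiS : i ∈ S := by
      simp only [hS, Finset.mem_filter]
      exact ⟨Finset.mem_univ _, Relation.ReflTransGen.refl⟩
    have hclosed : ∀ p ∈ A, 0 < c p → p.1 ∈ S → p.2 ∈ S := by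
      intro p hp hcp h1
      simp only [hS, Finset.mem_filter, Finset.mem_univ, true_and] at h1 ⊢
      exact h1.tail ⟨by simpa using hp, by simpa using hcp⟩
    have hjS : j ∈ S := by
      by_contra hjS
      have h1 : ∑ k ∈ S, rootVec n i j k = 1 := by
        rw [sum_rootVec]; simp [hiS, hjS]
      have h2 : ∑ k ∈ S, rootVec n i j k
          = ∑ p ∈ A, c p * ((if p.1 ∈ S then (1:ℝ) else 0)
              - (if p.2 ∈ S then 1 else 0)) := by
        rw [heq]
        simp only [Finset.sum_apply, Pi.smul_apply, smul_eq_mul]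
        rw [Finset.sum_comm]
        refine Finset.sum_congr rfl fun p _ => ?_
        rw [← Finset.mul_sum, sum_rootVec]
      have h3 : (∑ p ∈ A, c p * ((if p.1 ∈ S then (1:ℝ) else 0)
          - (if p.2 ∈ S then 1 else 0))) ≤ 0 := by
        refine Finset.sum_nonpos fun p hp => ?_
        rcases eq_or_lt_of_le (hc p) with h0 | h0
        · rw [← h0, zero_mul]
        · by_cases h1' : p.1 ∈ S
          · have := hclosed p hp h0 h1'
            simp [h1', this]
          · refine mul_nonpos_of_nonneg_of_nonpos (hc p) ?_
            simp only [h1', if_neg, if_false]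
            split <;> norm_num
      rw [h1] at h2
      linarith [h2 ▸ h3]
    have hrtg : Relation.ReflTransGen R i j := by
      simpa [hS] using hjS
    have htg : Relation.TransGen R i j := by
      rcases (Relation.reflTransGen_iff_eq_or_transGen.mp hrtg) with h | h
      · exact absurd h.symm hij
      · exact h
    exact Relation.TransGen.mono (fun a b h => h.1) i j htg
  · intro h
    clear hij
    induction h with
    | single hab =>
      refine ⟨fun q => if q = (i, _) then 1 else 0, fun p => ?_, single_comb A _ _ hab⟩
      dsimp only
      split <;> norm_num
    | @tail b2 c2 hib hbc ih =>
      obtain ⟨c, hc, heq⟩ := ih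
      refine ⟨c + fun q => if q = (b2, c2) then 1 else 0, fun p => ?_, ?_⟩
      · have : (0:ℝ) ≤ if p = (b2, c2) then 1 else 0 := by split <;> norm_num
        exact add_nonneg (hc p) this
      · rw [← rootVec_add _ _ _, heq, single_comb A _ _ hbc, ← Finset.sum_add_distrib]
        refine Finset.sum_congr rfl fun p _ => ?_
        rw [Pi.add_apply, add_smul]
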